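/- arXiv:1508.01858 — 5 statements merged into one kernel-verified Lean document; each statement's English description precedes it below -/
import Mathlib

section
/- For every nonnegative integer n, the n-th Cauchy-Carlitz number satisfies CC_n = Σ_{j ≥ 0, r^j − 1 ≤ n} (1/L_j) · S1_C(n, r^j − 1), where S1_C denotes the Stirling-Carlitz numbers of the first kind (the sum is finite since S1_C(n, m) = 0 whenever n < m). -/
open scoped Classical
open PowerSeries Finset

noncomputable section

variable (F : Type) [Field F] [Fintype F]

/-- The rational function field `K = 𝔽_r(T)`. -/
abbrev K : Type := RatFunc F

/-- `r`, the cardinality of the finite field of constants. -/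
def rr : ℕ := Fintype.card F

/-- The variable `T` of the rational function field. -/
def Tv : K F := RatFunc.X

/-- `[i] = T^{r^i} - T`. -/
def br (i : ℕ) : K F := Tv F ^ (rr F) ^ i - Tv F

/-- `D_0 = 1`, `D_i = [i] · D_{i-1}^r`. -/
def D : ℕ → K F
  | 0 => 1
  | i + 1 => br F (i + 1) * D i ^ rr F

/-- `L_0 = 1`, `L_i = [i] · L_{i-1}`. -/
def L : ℕ → K F
  | 0 => 1
  | i + 1 => br F (i + 1) * L i

/-- The Carlitz factorial `Π(n) = ∏_j D_j^{c_j}`, where `c_j = n / r^j % r` are the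
base-`r` digits of `n` (all digits with index `> n` vanish since `r ≥ 2`). -/
def Cf (n : ℕ) : K F := ∏ j ∈ Finset.range (n + 1), D F j ^ (n / (rr F) ^ j % rr F)

/-- The Carlitz logarithm `log_C(z) = Σ_{i ≥ 0} (-1)^i z^{r^i} / L_i`: the coefficient of
`z^m` is `(-1)^i / L_i` if `m = r^i` and `0` otherwise (note `i ≤ r^i = m` since `r ≥ 2`). -/
def logC : PowerSeries (K F) :=
  PowerSeries.mk fun m =>
    ∑ i ∈ Finset.range (m + 1), if m = (rr F) ^ i then (-1 : K F) ^ i / L F i else 0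

/-- The Carlitz exponential `e_C(z) = Σ_{i ≥ 0} z^{r^i} / D_i`. -/
def eC : PowerSeries (K F) :=
  PowerSeries.mk fun m =>
    ∑ i ∈ Finset.range (m + 1), if m = (rr F) ^ i then 1 / D F i else 0

/-- The power series `log_C(z)/z`. -/
def logCdivZ : PowerSeries (K F) :=
  PowerSeries.mk fun n => PowerSeries.coeff (n + 1) (logC F)

/-- The power series `e_C(z)/z`. -/
def eCdivZ : PowerSeries (K F) :=
  PowerSeries.mk fun n => PowerSeries.coeff (n + 1) (eC F)

/-! ### Auxiliary lemmas -/

lemma two_le_rr : 2 ≤ rr F := Fintype.one_lt_card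

lemma rr_pow_pos (i : ℕ) : 0 < (rr F) ^ i :=
  Nat.pow_pos (by have := two_le_rr F; omega)

lemma lt_rr_pow (k : ℕ) : k < (rr F) ^ k :=
  Nat.lt_pow_self (by have := two_le_rr F; omega)

lemma rr_pow_injective : Function.Injective fun i : ℕ => (rr F) ^ i :=
  Nat.pow_right_injective (two_le_rr F)

/-- A Frobenius-type ring endomorphism of `K F` raising to the `r^i`-th power. -/
lemma exists_frob (i : ℕ) : ∃ f : K F →+* K F, ∀ x, f x = x ^ (rr F) ^ i := by
  haveI : CharP (K F) (ringChar F) := charP_of_injective_algebraMap' F (A := K F) (ringChar F)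
  obtain ⟨e, hp, hcard⟩ := FiniteField.card F (ringChar F)
  haveI : Fact (ringChar F).Prime := ⟨hp⟩
  refine ⟨iterateFrobenius (K F) (ringChar F) ((e : ℕ) * i), fun x => ?_⟩
  rw [iterateFrobenius_def]
  congr 1
  rw [pow_mul]
  congr 1
  rw [rr, hcard]

/-- A Frobenius-type ring endomorphism of `(K F)⟦X⟧` raising to the `r`-th power. -/
lemma exists_frobS : ∃ f : PowerSeries (K F) →+* PowerSeries (K F),
    ∀ x, f x = x ^ rr F := by
  haveI : CharP (K F) (ringChar F) := charP_of_injective_algebraMap' F (A := K F) (ringChar F)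
  haveI : CharP (PowerSeries (K F)) (ringChar F) :=
    charP_of_injective_ringHom (PowerSeries.C_injective) (ringChar F)
  obtain ⟨e, hp, hcard⟩ := FiniteField.card F (ringChar F)
  haveI : Fact (ringChar F).Prime := ⟨hp⟩
  refine ⟨iterateFrobenius (PowerSeries (K F)) (ringChar F) (e : ℕ), fun x => ?_⟩
  rw [iterateFrobenius_def]
  congr 1
  rw [rr, hcard]

lemma frob_sum {ι : Type*} (s : Finset ι) (g : ι → K F) (i : ℕ) :
    (∑ j ∈ s, g j) ^ (rr F) ^ i = ∑ j ∈ s, g j ^ (rr F) ^ i := by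
  obtain ⟨f, hf⟩ := exists_frob F i
  simp only [← hf]
  exact map_sum f g s

lemma frob_neg_one_pow (a i : ℕ) : ((-1 : K F) ^ a) ^ (rr F) ^ i = (-1 : K F) ^ a := by
  obtain ⟨f, hf⟩ := exists_frob F i
  rw [← hf, map_pow, map_neg, map_one]

lemma frobS_add (x y : PowerSeries (K F)) :
    (x + y) ^ rr F = x ^ rr F + y ^ rr F := by
  obtain ⟨f, hf⟩ := exists_frobS F
  rw [← hf, ← hf, ← hf, map_add]

lemma frobS_sum {ι : Type*} (s : Finset ι) (g : ι → PowerSeries (K F)) :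
    (∑ j ∈ s, g j) ^ rr F = ∑ j ∈ s, g j ^ rr F := by
  obtain ⟨f, hf⟩ := exists_frobS F
  simp only [← hf]
  exact map_sum f g s

lemma br_zero : br F 0 = 0 := by rw [br, pow_zero, pow_one, sub_self]

lemma br_ne_zero (m : ℕ) (hm : 1 ≤ m) : br F m ≠ 0 := by
  intro h
  have hX : (Tv F) ^ (rr F) ^ m = Tv F := sub_eq_zero.mp h
  have : (Polynomial.X : Polynomial F) ^ (rr F) ^ m = Polynomial.X := by
    apply RatFunc.algebraMap_injective F
    rw [map_pow, RatFunc.algebraMap_X]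
    exact hX
  have hdeg := congrArg Polynomial.natDegree this
  rw [Polynomial.natDegree_X_pow, Polynomial.natDegree_X] at hdeg
  have h2 : 2 ≤ (rr F) ^ m := by
    calc 2 ≤ rr F := two_le_rr F
    _ = (rr F) ^ 1 := (pow_one _).symm
    _ ≤ (rr F) ^ m := Nat.pow_le_pow_right (by have := two_le_rr F; omega) hm
  omega

lemma D_ne_zero (i : ℕ) : D F i ≠ 0 := by
  induction i with
  | zero => simp [D]
  | succ k ih =>
    simp only [D]
    exact mul_ne_zero (br_ne_zero F (k + 1) (by omega)) (pow_ne_zero _ ih)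

lemma L_ne_zero (i : ℕ) : L F i ≠ 0 := by
  induction i with
  | zero => simp [L]
  | succ k ih =>
    simp only [L]
    exact mul_ne_zero (br_ne_zero F (k + 1) (by omega)) ih

lemma Cf_ne_zero (n : ℕ) : Cf F n ≠ 0 :=
  Finset.prod_ne_zero_iff.mpr fun j _ => pow_ne_zero _ (D_ne_zero F j)

lemma br_add (i k : ℕ) : br F (i + k) = br F i + br F k ^ (rr F) ^ i := by
  have h : (br F k) ^ (rr F) ^ i = Tv F ^ (rr F) ^ (i + k) - Tv F ^ (rr F) ^ i := by
    obtain ⟨f, hf⟩ := exists_frob F i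
    rw [br, ← hf, map_sub, hf, hf, ← pow_mul, ← pow_add, add_comm k i]
  rw [br, br, h]
  ring

/-! ### The key identity -/

/-- `A m = ∑_{i=0}^{m} (-1)^{m-i} / (D_i L_{m-i}^{r^i})`. -/
def A (m : ℕ) : K F :=
  ∑ i ∈ Finset.range (m + 1), (-1 : K F) ^ (m - i) / (D F i * L F (m - i) ^ (rr F) ^ i)

lemma A_zero : A F 0 = 1 := by
  simp [A, D, L]

lemma frob_sum1 {ι : Type*} (s : Finset ι) (g : ι → K F) :
    (∑ j ∈ s, g j) ^ rr F = ∑ j ∈ s, g j ^ rr F := by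
  have h := frob_sum F s g 1
  simpa using h

lemma frob_neg_one_pow1 (a : ℕ) : ((-1 : K F) ^ a) ^ rr F = (-1 : K F) ^ a := by
  have h := frob_neg_one_pow F a 1
  simpa using h

lemma key (m : ℕ) : br F (m + 1) * A F (m + 1) = (A F m) ^ rr F - A F m := by
  have hr2 := two_le_rr F
  have hterm : ∀ i ∈ Finset.range (m + 1 + 1),
      br F (m + 1) * ((-1 : K F) ^ (m + 1 - i) / (D F i * L F (m + 1 - i) ^ (rr F) ^ i)) =
      (if i = 0 then 0 else
        ((-1 : K F) ^ (m - (i - 1)) /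
          (D F (i - 1) * L F (m - (i - 1)) ^ (rr F) ^ (i - 1))) ^ rr F)
      - (if i = m + 1 then 0 else
        (-1 : K F) ^ (m - i) / (D F i * L F (m - i) ^ (rr F) ^ i)) := by
    intro i hi
    rw [Finset.mem_range] at hi
    have hbr : br F (m + 1) = br F i + br F (m + 1 - i) ^ (rr F) ^ i := by
      have h := br_add F i (m + 1 - i)
      rwa [show i + (m + 1 - i) = m + 1 by omega] at h
    have h1 : br F i * ((-1 : K F) ^ (m + 1 - i) / (D F i * L F (m + 1 - i) ^ (rr F) ^ i)) =
        (if i = 0 then 0 else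
          ((-1 : K F) ^ (m - (i - 1)) /
            (D F (i - 1) * L F (m - (i - 1)) ^ (rr F) ^ (i - 1))) ^ rr F) := by
      match i with
      | 0 => rw [if_pos rfl, br_zero, zero_mul]
      | j + 1 =>
        rw [if_neg (Nat.succ_ne_zero j)]
        have hj : j ≤ m := by omega
        have e1 : m + 1 - (j + 1) = m - j := by omega
        have e2 : j + 1 - 1 = j := rfl
        rw [e1, e2]
        have hb := br_ne_zero F (j + 1) (by omega)
        have hD := D_ne_zero F j
        have hL := L_ne_zero F (m - j)
        have hDj : D F (j + 1) = br F (j + 1) * D F j ^ rr F := rfl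
        have hLp : L F (m - j) ^ (rr F) ^ (j + 1) ≠ 0 := pow_ne_zero _ hL
        have hDp : D F j ^ rr F ≠ 0 := pow_ne_zero _ hD
        have hfix : (((-1 : K F) ^ (m - j)) / (D F j * L F (m - j) ^ (rr F) ^ j)) ^ rr F
            = (-1 : K F) ^ (m - j) / (D F j ^ rr F * L F (m - j) ^ (rr F) ^ (j + 1)) := by
          rw [div_pow, mul_pow, frob_neg_one_pow1, ← pow_mul, ← pow_succ]
        rw [hfix, hDj]
        field_simp
    have h2 : br F (m + 1 - i) ^ (rr F) ^ i *
        ((-1 : K F) ^ (m + 1 - i) / (D F i * L F (m + 1 - i) ^ (rr F) ^ i)) =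
        - (if i = m + 1 then 0 else
          (-1 : K F) ^ (m - i) / (D F i * L F (m - i) ^ (rr F) ^ i)) := by
      by_cases hitop : i = m + 1
      · subst hitop
        rw [if_pos rfl, Nat.sub_self, br_zero, zero_pow (by positivity), zero_mul, neg_zero]
      · rw [if_neg hitop]
        have him : i ≤ m := by omega
        have e1 : m + 1 - i = (m - i) + 1 := by omega
        rw [e1]
        have hb := br_ne_zero F ((m - i) + 1) (by omega)
        have hbp : br F ((m - i) + 1) ^ (rr F) ^ i ≠ 0 := pow_ne_zero _ hb
        have hD := D_ne_zero F i
        have hL := L_ne_zero F (m - i)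
        have hLp : L F (m - i) ^ (rr F) ^ i ≠ 0 := pow_ne_zero _ hL
        have hLs : L F ((m - i) + 1) = br F ((m - i) + 1) * L F (m - i) := rfl
        rw [pow_succ, hLs, mul_pow]
        field_simp
    rw [hbr, add_mul, h1, h2]
    ring
  rw [A, Finset.mul_sum]
  rw [Finset.sum_congr rfl hterm, Finset.sum_sub_distrib]
  congr 1
  · rw [Finset.sum_range_succ', if_pos rfl, add_zero, A, frob_sum1]
    refine Finset.sum_congr rfl fun i _ => ?_
    rw [if_neg (Nat.succ_ne_zero i)]
    simp only [Nat.add_sub_cancel]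
  · rw [Finset.sum_range_succ, if_pos rfl, add_zero, A]
    refine Finset.sum_congr rfl fun i hi => ?_
    rw [if_neg (by rw [Finset.mem_range] at hi; omega)]

lemma A_succ_eq_zero (m : ℕ) : A F (m + 1) = 0 := by
  induction m with
  | zero =>
    have h := key F 0
    rw [A_zero, one_pow, sub_self] at h
    exact (mul_eq_zero.mp h).resolve_left (br_ne_zero F 1 (by omega))
  | succ k ih =>
    have h := key F (k + 1)
    rw [ih, zero_pow (by have := two_le_rr F; omega), sub_self] at h
    exact (mul_eq_zero.mp h).resolve_left (br_ne_zero F (k + 2) (by omega))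

/-! ### Coefficients of powers of `logC` -/

lemma monomial_pow' (a : ℕ) (c : K F) (t : ℕ) :
    (PowerSeries.C c * PowerSeries.X ^ a) ^ t =
      PowerSeries.C (c ^ t) * PowerSeries.X ^ (a * t) := by
  rw [mul_pow, ← map_pow, ← pow_mul]

lemma coeff_C_mul_X_pow (m a : ℕ) (c : K F) :
    PowerSeries.coeff m (PowerSeries.C c * PowerSeries.X ^ a) =
      if m = a then c else 0 := by
  rw [PowerSeries.coeff_C_mul, PowerSeries.coeff_X_pow]
  split <;> simp

lemma coeff_logC (m : ℕ) : PowerSeries.coeff m (logC F) =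
    ∑ i ∈ Finset.range (m + 1), if m = (rr F) ^ i then (-1 : K F) ^ i / L F i else 0 := by
  simp [logC]

lemma coeff_logC_zero : PowerSeries.coeff 0 (logC F) = 0 := by
  rw [coeff_logC]
  simp

lemma pow_rr_coeff (i : ℕ) (b : ℕ → K F) (g : PowerSeries (K F))
    (hg : ∀ m, PowerSeries.coeff m g =
      ∑ k ∈ Finset.range (m + 1), if m = (rr F) ^ (k + i) then b k else 0) (n : ℕ) :
    PowerSeries.coeff n (g ^ rr F) =
      ∑ k ∈ Finset.range (n + 1), if n = (rr F) ^ (k + (i + 1)) then (b k) ^ rr F else 0 := by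
  classical
  set P : PowerSeries (K F) :=
    ∑ k ∈ Finset.range (n + 1),
      PowerSeries.C (b k) * PowerSeries.X ^ ((rr F) ^ (k + i)) with hPdef
  have hPcoeff : ∀ m, PowerSeries.coeff m P =
      ∑ k ∈ Finset.range (n + 1), if m = (rr F) ^ (k + i) then b k else 0 := by
    intro m
    rw [hPdef, map_sum]
    exact Finset.sum_congr rfl fun k _ => coeff_C_mul_X_pow F m _ (b k)
  have hP : ∀ m, m ≤ n → PowerSeries.coeff m P = PowerSeries.coeff m g := by
    intro m hm
    rw [hPcoeff, hg]
    refine (Finset.sum_subset (Finset.range_subset_range.mpr (by omega)) fun k hk hk2 => ?_).symm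
    rw [Finset.mem_range, not_lt] at hk2
    rw [if_neg]
    intro hcon
    have h1 : k < (rr F) ^ k := lt_rr_pow F k
    have h2 : (rr F) ^ k ≤ (rr F) ^ (k + i) :=
      Nat.pow_le_pow_right (by have := two_le_rr F; omega) (by omega)
    omega
  have hdvd : (PowerSeries.X : PowerSeries (K F)) ^ (n + 1) ∣ g - P :=
    PowerSeries.X_pow_dvd_iff.mpr fun m hm => by
      rw [map_sub, hP m (by omega), sub_self]
  have hsplit : g ^ rr F = P ^ rr F + (g - P) ^ rr F := by
    have h := frobS_add F P (g - P)
    rwa [show P + (g - P) = g by ring] at h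
  have hzero : PowerSeries.coeff n ((g - P) ^ rr F) = 0 := by
    have hd2 : (PowerSeries.X : PowerSeries (K F)) ^ ((n + 1) * rr F) ∣ (g - P) ^ rr F := by
      rw [pow_mul]; exact pow_dvd_pow_of_dvd hdvd _
    have hle : n + 1 ≤ (n + 1) * rr F :=
      Nat.le_mul_of_pos_right _ (by have := two_le_rr F; omega)
    exact PowerSeries.X_pow_dvd_iff.mp (dvd_trans (pow_dvd_pow _ hle) hd2) n (by omega)
  have hPpow : P ^ rr F = ∑ k ∈ Finset.range (n + 1),
      PowerSeries.C ((b k) ^ rr F) * PowerSeries.X ^ ((rr F) ^ (k + i) * rr F) := by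
    rw [hPdef, frobS_sum]
    exact Finset.sum_congr rfl fun k _ => monomial_pow' F _ _ _
  rw [hsplit, map_add, hzero, add_zero, hPpow, map_sum]
  refine Finset.sum_congr rfl fun k _ => ?_
  rw [coeff_C_mul_X_pow]
  have he : (rr F) ^ (k + i) * rr F = (rr F) ^ (k + (i + 1)) := by
    rw [← pow_succ, show k + i + 1 = k + (i + 1) from by omega]
  rw [he]

lemma coeff_logC_pow (i n : ℕ) :
    PowerSeries.coeff n (logC F ^ (rr F) ^ i) =
      ∑ k ∈ Finset.range (n + 1),
        if n = (rr F) ^ (k + i) then ((-1 : K F) ^ k / L F k) ^ (rr F) ^ i else 0 := by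
  induction i generalizing n with
  | zero =>
    simp only [pow_zero, pow_one]
    rw [coeff_logC]
    simp
  | succ j ih =>
    have : (rr F) ^ (j + 1) = (rr F) ^ j * rr F := pow_succ _ _
    rw [this, pow_mul]
    rw [pow_rr_coeff F j (fun k => ((-1 : K F) ^ k / L F k) ^ (rr F) ^ j) _ ih n]
    refine Finset.sum_congr rfl fun k _ => ?_
    congr 1
    rw [← pow_mul, ← pow_succ]

/-! ### The functional-equation sum -/

lemma main_sum (n : ℕ) :
    ∑ j ∈ Finset.range (n + 1), (1 / D F j) * PowerSeries.coeff n (logC F ^ (rr F) ^ j) =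
      PowerSeries.coeff n (PowerSeries.X : PowerSeries (K F)) := by
  classical
  have hr2 := two_le_rr F
  simp only [coeff_logC_pow, PowerSeries.coeff_X]
  by_cases hpow : ∃ m, n = (rr F) ^ m
  · obtain ⟨m, rfl⟩ := hpow
    have hmlt : m < (rr F) ^ m := lt_rr_pow F m
    have hinner : ∀ j, (∑ k ∈ Finset.range ((rr F) ^ m + 1),
        if (rr F) ^ m = (rr F) ^ (k + j) then ((-1 : K F) ^ k / L F k) ^ (rr F) ^ j else 0)
        = if j ≤ m then ((-1 : K F) ^ (m - j) / L F (m - j)) ^ (rr F) ^ j else 0 := by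
      intro j
      by_cases hj : j ≤ m
      · rw [if_pos hj]
        have hmem : m - j ∈ Finset.range ((rr F) ^ m + 1) := Finset.mem_range.mpr (by omega)
        rw [Finset.sum_eq_single_of_mem (m - j) hmem]
        · rw [if_pos (by congr 1; omega)]
        · intro k _ hkne
          rw [if_neg]
          intro hcon
          have := rr_pow_injective F hcon
          omega
      · rw [if_neg hj]
        refine Finset.sum_eq_zero fun k _ => ?_
        rw [if_neg]
        intro hcon
        have := rr_pow_injective F hcon
        omega
    rw [Finset.sum_congr rfl fun j _ => by rw [hinner j]]
    have hsub : ∑ j ∈ Finset.range ((rr F) ^ m + 1), (1 / D F j) *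
        (if j ≤ m then ((-1 : K F) ^ (m - j) / L F (m - j)) ^ (rr F) ^ j else 0)
        = ∑ j ∈ Finset.range (m + 1), (1 / D F j) *
          ((-1 : K F) ^ (m - j) / L F (m - j)) ^ (rr F) ^ j := by
      have hss : Finset.range (m + 1) ⊆ Finset.range ((rr F) ^ m + 1) :=
        Finset.range_subset_range.mpr (by omega)
      rw [← Finset.sum_subset hss
        (fun j _ hj => by
          rw [Finset.mem_range, not_lt] at hj
          rw [if_neg (by omega), mul_zero])]
      exact Finset.sum_congr rfl fun j hj => by
        rw [if_pos (by rw [Finset.mem_range] at hj; omega)]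
    rw [hsub]
    have hA : ∑ j ∈ Finset.range (m + 1), (1 / D F j) *
        ((-1 : K F) ^ (m - j) / L F (m - j)) ^ (rr F) ^ j = A F m := by
      rw [A]
      refine Finset.sum_congr rfl fun j _ => ?_
      rw [div_pow, frob_neg_one_pow, div_mul_div_comm, one_mul]
    rw [hA]
    match m with
    | 0 => rw [A_zero, if_pos (by norm_num)]
    | m' + 1 =>
      rw [A_succ_eq_zero, if_neg]
      have : 2 ≤ (rr F) ^ (m' + 1) := by
        calc 2 ≤ rr F := hr2
        _ = (rr F) ^ 1 := (pow_one _).symm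
        _ ≤ (rr F) ^ (m' + 1) := Nat.pow_le_pow_right (by omega) (by omega)
      omega
  · rw [if_neg (fun h => hpow ⟨0, by rw [h, pow_zero]⟩)]
    refine Finset.sum_eq_zero fun j _ => ?_
    rw [Finset.sum_eq_zero fun k _ => by
      rw [if_neg (fun h => hpow ⟨k + j, h⟩)], mul_zero]

/-- `G` is the candidate coefficient sequence for `z/log_C(z)`. -/
def G (b : ℕ) : K F :=
  ∑ j ∈ Finset.range (b + 1), (1 / D F j) *
    PowerSeries.coeff b (logC F ^ ((rr F) ^ j - 1))

lemma coeff_logC_pow_eq_zero {b k : ℕ} (hbk : b < k) :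
    PowerSeries.coeff b (logC F ^ k) = 0 := by
  have hX : (PowerSeries.X : PowerSeries (K F)) ^ k ∣ logC F ^ k :=
    pow_dvd_pow_of_dvd (PowerSeries.X_dvd_iff.mpr (by
      rw [← PowerSeries.coeff_zero_eq_constantCoeff_apply]; exact coeff_logC_zero F)) k
  exact PowerSeries.X_pow_dvd_iff.mp hX b hbk

lemma logC_mul_G : logC F * PowerSeries.mk (G F) = PowerSeries.X := by
  ext n
  rw [PowerSeries.coeff_mul]
  have hGext : ∀ p : ℕ × ℕ, p ∈ Finset.HasAntidiagonal.antidiagonal n →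
      PowerSeries.coeff p.2 (PowerSeries.mk (G F)) =
      ∑ j ∈ Finset.range (n + 1), (1 / D F j) *
        PowerSeries.coeff p.2 (logC F ^ ((rr F) ^ j - 1)) := by
    intro p hp
    have hp2 : p.2 ≤ n := by
      have := Finset.HasAntidiagonal.mem_antidiagonal.mp hp; omega
    rw [PowerSeries.coeff_mk, G]
    refine Finset.sum_subset (Finset.range_subset_range.mpr (by omega)) fun j _ hj => ?_
    rw [Finset.mem_range, not_lt] at hj
    have hjlt : j < (rr F) ^ j := lt_rr_pow F j
    rw [coeff_logC_pow_eq_zero F (by omega), mul_zero]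
  calc ∑ p ∈ Finset.HasAntidiagonal.antidiagonal n,
        PowerSeries.coeff p.1 (logC F) * PowerSeries.coeff p.2 (PowerSeries.mk (G F))
      = ∑ p ∈ Finset.HasAntidiagonal.antidiagonal n, ∑ j ∈ Finset.range (n + 1),
          (1 / D F j) * (PowerSeries.coeff p.1 (logC F) *
            PowerSeries.coeff p.2 (logC F ^ ((rr F) ^ j - 1))) := by
        refine Finset.sum_congr rfl fun p hp => ?_
        rw [hGext p hp, Finset.mul_sum]
        exact Finset.sum_congr rfl fun j _ => by ring
    _ = ∑ j ∈ Finset.range (n + 1), (1 / D F j) * ∑ p ∈ Finset.HasAntidiagonal.antidiagonal n,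
          PowerSeries.coeff p.1 (logC F) *
            PowerSeries.coeff p.2 (logC F ^ ((rr F) ^ j - 1)) := by
        rw [Finset.sum_comm]
        exact Finset.sum_congr rfl fun j _ => by rw [Finset.mul_sum]
    _ = ∑ j ∈ Finset.range (n + 1), (1 / D F j) *
          PowerSeries.coeff n (logC F ^ (rr F) ^ j) := by
        refine Finset.sum_congr rfl fun j _ => ?_
        congr 1
        rw [← PowerSeries.coeff_mul]
        congr 1
        rw [← pow_succ']
        congr 1
        have := rr_pow_pos F j
        omega
    _ = PowerSeries.coeff n (PowerSeries.X : PowerSeries (K F)) := main_sum F n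

/-! ### The Carlitz factorial identities -/

lemma pow_sub_one_eq (r : ℕ) (hr : 1 ≤ r) (s t : ℕ) :
    r ^ (s + t) - 1 = (r ^ s - 1) * r ^ t + (r ^ t - 1) := by
  have h1 : r ^ s * r ^ t = r ^ (s + t) := (pow_add r s t).symm
  have h2 : 1 ≤ r ^ s := Nat.one_le_pow _ _ hr
  have h3 : 1 ≤ r ^ t := Nat.one_le_pow _ _ hr
  have h4 : r ^ t ≤ r ^ (s + t) := Nat.pow_le_pow_right hr (by omega)
  have h5 : 1 ≤ r ^ (s + t) := Nat.one_le_pow _ _ hr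
  rw [Nat.sub_mul, one_mul, h1]
  omega

lemma Cf_pow_sub_one (i : ℕ) :
    Cf F ((rr F) ^ i - 1) = ∏ j ∈ Finset.range i, D F j ^ (rr F - 1) := by
  have hr2 := two_le_rr F
  have hr1 : 1 ≤ rr F := by omega
  have hdigit : ∀ j < i, ((rr F) ^ i - 1) / (rr F) ^ j % rr F = rr F - 1 := by
    intro j hj
    have e1 : (rr F) ^ i - 1 = ((rr F) ^ j - 1) + ((rr F) ^ (i - j) - 1) * (rr F) ^ j := by
      have h := pow_sub_one_eq (rr F) hr1 (i - j) j
      rw [show i - j + j = i by omega] at h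
      exact h.trans (Nat.add_comm _ _)
    have e2 : ((rr F) ^ i - 1) / (rr F) ^ j = (rr F) ^ (i - j) - 1 := by
      rw [e1, Nat.add_mul_div_right _ _ (rr_pow_pos F j),
        Nat.div_eq_of_lt (by have := rr_pow_pos F j; omega), zero_add]
    rw [e2]
    have e3 : (rr F) ^ (i - j) - 1 = (rr F - 1) + ((rr F) ^ (i - j - 1) - 1) * rr F := by
      have h := pow_sub_one_eq (rr F) hr1 (i - j - 1) 1
      rw [show i - j - 1 + 1 = i - j by omega, pow_one] at h
      exact h.trans (Nat.add_comm _ _)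
    rw [e3, Nat.add_mul_mod_self_right, Nat.mod_eq_of_lt (by omega)]
  have hdigit0 : ∀ j, i ≤ j → ((rr F) ^ i - 1) / (rr F) ^ j % rr F = 0 := by
    intro j hj
    have h1 : (rr F) ^ i ≤ (rr F) ^ j := Nat.pow_le_pow_right (by omega) hj
    have h2 := rr_pow_pos F i
    rw [Nat.div_eq_of_lt (by omega), Nat.zero_mod]
  rw [Cf]
  rw [← Finset.prod_subset (Finset.range_subset_range.mpr
      (by have := lt_rr_pow F i; omega : i ≤ (rr F) ^ i - 1 + 1))
    (fun j _ hj => by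
      rw [Finset.mem_range, not_lt] at hj
      rw [hdigit0 j hj, pow_zero])]
  exact Finset.prod_congr rfl fun j hj => by
    rw [hdigit j (Finset.mem_range.mp hj)]

lemma D_eq_L_mul (i : ℕ) : D F i = L F i * ∏ j ∈ Finset.range i, D F j ^ (rr F - 1) := by
  induction i with
  | zero => simp [D, L]
  | succ k ih =>
    have hr : rr F = (rr F - 1) + 1 := by have := two_le_rr F; omega
    calc D F (k + 1) = br F (k + 1) * D F k ^ rr F := rfl
    _ = br F (k + 1) * (D F k ^ (rr F - 1) * D F k) := by
        have hp : D F k ^ rr F = D F k ^ (rr F - 1) * D F k := by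
          conv_lhs => rw [hr]
          rw [pow_succ]
        rw [hp]
    _ = br F (k + 1) * (D F k ^ (rr F - 1) *
        (L F k * ∏ j ∈ Finset.range k, D F j ^ (rr F - 1))) := by rw [← ih]
    _ = (br F (k + 1) * L F k) *
        ((∏ j ∈ Finset.range k, D F j ^ (rr F - 1)) * D F k ^ (rr F - 1)) := by ring
    _ = L F (k + 1) * ∏ j ∈ Finset.range (k + 1), D F j ^ (rr F - 1) := by
        rw [Finset.prod_range_succ]; rfl

/-- Theorem 1: `CC_n = Σ_{j ≥ 0, r^j - 1 ≤ n} (1/L_j) · S1_C(n, r^j - 1)`.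
(Any `j` with `r^j - 1 ≤ n` satisfies `j ≤ n` since `r ≥ 2`, so the sum over
`j ∈ range (n+1)` filtered by `r^j - 1 ≤ n` is exactly the sum in question.) -/
theorem cauchyCarlitz_eq_sum_stirlingCarlitzFirst
    (CC : ℕ → K F) (S1C : ℕ → ℕ → K F)
    (hCC : (PowerSeries.mk fun n => CC n / Cf F n) * logCdivZ F = 1)
    (hS1C : ∀ n k : ℕ,
      PowerSeries.coeff n (logC F ^ k) / Cf F k = S1C n k / Cf F n)
    (n : ℕ) :
    CC n = ∑ j ∈ (Finset.range (n + 1)).filter (fun j => (rr F) ^ j - 1 ≤ n),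
      (1 / L F j) * S1C n ((rr F) ^ j - 1) := by
  classical
  have hXeq : PowerSeries.X * logCdivZ F = logC F := by
    ext k
    cases k with
    | zero =>
      rw [PowerSeries.coeff_zero_eq_constantCoeff_apply, map_mul,
        PowerSeries.constantCoeff_X, zero_mul]
      exact (coeff_logC_zero F).symm
    | succ k =>
      rw [PowerSeries.coeff_succ_X_mul, logCdivZ, PowerSeries.coeff_mk]
  have hX : (PowerSeries.X : PowerSeries (K F)) * (logCdivZ F * PowerSeries.mk (G F)) =
      PowerSeries.X * 1 := by
    rw [mul_one, ← mul_assoc, hXeq, logC_mul_G]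
  have h1 : logCdivZ F * PowerSeries.mk (G F) = 1 :=
    mul_left_cancel₀ PowerSeries.X_ne_zero hX
  have h2 : (PowerSeries.mk fun n => CC n / Cf F n) = PowerSeries.mk (G F) := by
    calc (PowerSeries.mk fun n => CC n / Cf F n)
        = (PowerSeries.mk fun n => CC n / Cf F n) * (logCdivZ F * PowerSeries.mk (G F)) := by
          rw [h1, mul_one]
      _ = ((PowerSeries.mk fun n => CC n / Cf F n) * logCdivZ F) * PowerSeries.mk (G F) :=
          (mul_assoc _ _ _).symm
      _ = PowerSeries.mk (G F) := by rw [hCC, one_mul]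
  have h3 : CC n / Cf F n = G F n := by
    have h := congrArg (PowerSeries.coeff n) h2
    rwa [PowerSeries.coeff_mk, PowerSeries.coeff_mk] at h
  have h4 : CC n = Cf F n * G F n := by
    rw [div_eq_iff (Cf_ne_zero F n)] at h3
    rw [h3]; ring
  have hG : G F n = ∑ j ∈ (Finset.range (n + 1)).filter (fun j => (rr F) ^ j - 1 ≤ n),
      (1 / D F j) * PowerSeries.coeff n (logC F ^ ((rr F) ^ j - 1)) := by
    rw [G]
    refine (Finset.sum_filter_of_ne fun j _ hj => ?_).symm
    by_contra hcon
    rw [not_le] at hcon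
    exact hj (by rw [coeff_logC_pow_eq_zero F hcon, mul_zero])
  rw [h4, hG, Finset.mul_sum]
  refine Finset.sum_congr rfl fun j _ => ?_
  have hs := hS1C n ((rr F) ^ j - 1)
  rw [div_eq_div_iff (Cf_ne_zero F _) (Cf_ne_zero F n)] at hs
  have hDj : D F j = L F j * Cf F ((rr F) ^ j - 1) := by
    rw [Cf_pow_sub_one]
    exact D_eq_L_mul F j
  have hL := L_ne_zero F j
  have hCfk := Cf_ne_zero F ((rr F) ^ j - 1)
  have hCfn := Cf_ne_zero F n
  have hc : PowerSeries.coeff n (logC F ^ ((rr F) ^ j - 1))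
      = S1C n ((rr F) ^ j - 1) * Cf F ((rr F) ^ j - 1) / Cf F n := by
    rw [eq_div_iff hCfn]
    exact hs
  rw [hDj, hc]
  field_simp
end
end

section
/- For every integer n ≥ 1, the n-th Cauchy-Carlitz number satisfies CC_n = Π(n) · Σ_{k=1}^{n} (−1)^k Σ (−1)^{i_1 + ⋯ + i_k} / (L_{i_1} ⋯ L_{i_k}), where the inner sum runs over all k-tuples of integers i_1, …, i_k ≥ 1 with r^{i_1} + ⋯ + r^{i_k} = n + k. -/
open scoped Classical
open PowerSeries Finset

noncomputable section

variable (F : Type) [Field F] [Fintype F]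

lemma br_ne_zero_s2 (i : ℕ) (hi : 1 ≤ i) : br F i ≠ 0 := by
  have h2 : 2 ≤ (rr F) ^ i := le_trans (two_le_rr F) (Nat.le_self_pow (by omega) _)
  have hpoly : (Polynomial.X : Polynomial F) ^ (rr F) ^ i ≠ Polynomial.X := by
    intro h
    have hc : ((Polynomial.X : Polynomial F) ^ (rr F) ^ i).coeff ((rr F) ^ i)
        = (Polynomial.X : Polynomial F).coeff ((rr F) ^ i) :=
      congrArg (fun p => Polynomial.coeff p ((rr F) ^ i)) h
    rw [Polynomial.coeff_X_pow, if_pos rfl, Polynomial.coeff_X, if_neg (by omega)] at hc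
    exact one_ne_zero hc
  have : Tv F ^ (rr F) ^ i ≠ Tv F := by
    intro h
    apply hpoly
    apply RatFunc.algebraMap_injective F
    simpa [Tv, RatFunc.algebraMap_X] using h
  exact sub_ne_zero.mpr this

lemma coeff_logCdivZ (m : ℕ) : PowerSeries.coeff m (logCdivZ F) =
    ∑ i ∈ Finset.range (m + 2), if m + 1 = (rr F) ^ i then (-1 : K F) ^ i / L F i else 0 := by
  simp [logCdivZ, logC]

lemma coeff_g (N m : ℕ) (hm : m < N) :
    PowerSeries.coeff m (logCdivZ F - 1) =
      ∑ i ∈ Finset.Icc 1 N, if m + 1 = (rr F) ^ i then (-1 : K F) ^ i / L F i else 0 := by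
  have hins : Finset.range (m + 2) = insert 0 (Finset.Icc 1 (m + 1)) := by
    ext x; simp [Nat.lt_succ_iff]; omega
  have h0 : (if m + 1 = (rr F) ^ 0 then (-1 : K F) ^ 0 / L F 0 else 0)
      = if m = 0 then 1 else 0 := by
    simp only [pow_zero, L]
    by_cases h : m = 0 <;> simp [h]
  rw [map_sub, coeff_logCdivZ, hins, Finset.sum_insert (by simp), h0,
    PowerSeries.coeff_one]
  rw [add_sub_cancel_left]
  apply Finset.sum_subset
  · exact Finset.Icc_subset_Icc_right (by omega)
  · intro i hi hni
    simp only [Finset.mem_Icc] at hi hni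
    have h2 : m + 2 ≤ i := by omega
    have : i < (rr F) ^ i := Nat.lt_pow_self (two_le_rr F)
    rw [if_neg (by omega)]

lemma coeff_gpow (n k : ℕ) (hk : 1 ≤ k) :
    PowerSeries.coeff n ((logCdivZ F - 1) ^ k) =
      ∑ i ∈ (Fintype.piFinset fun _ : Fin k => Finset.Icc 1 (n + k)).filter
          (fun i => ∑ t, (rr F) ^ (i t) = n + k),
        (-1 : K F) ^ (∑ t, i t) / ∏ t, L F (i t) := by
  classical
  set g := logCdivZ F - 1 with hg
  have hprod : g ^ k = ∏ _t : Fin k, g := by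
    simp [Finset.prod_const, Finset.card_univ]
  rw [hprod, PowerSeries.coeff_prod]
  have step1 : ∀ l ∈ Finset.finsuppAntidiag (Finset.univ : Finset (Fin k)) n,
      (∏ t : Fin k, PowerSeries.coeff (l t) g) =
      ∑ p ∈ Fintype.piFinset (fun _ : Fin k => Finset.Icc 1 (n + k)),
        ∏ t : Fin k, (if l t + 1 = (rr F) ^ (p t) then (-1 : K F) ^ (p t) / L F (p t) else 0) := by
    intro l hl
    rw [Finset.mem_finsuppAntidiag] at hl
    have hle : ∀ t : Fin k, l t ≤ n := by
      intro t
      rw [← hl.1]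
      exact Finset.single_le_sum (fun _ _ => Nat.zero_le _) (Finset.mem_univ t)
    rw [Finset.prod_congr rfl (fun t _ =>
      coeff_g F (n + k) (l t) (by have := hle t; omega)), Finset.prod_univ_sum]
  rw [Finset.sum_congr rfl step1, Finset.sum_comm]
  rw [Finset.sum_filter]
  apply Finset.sum_congr rfl
  intro p hp
  rw [Fintype.mem_piFinset] at hp
  have hp1 : ∀ t : Fin k, 1 ≤ (rr F) ^ (p t) := fun t => Nat.one_le_pow _ _ (by
    have := two_le_rr F; omega)
  by_cases hcond : ∑ t, (rr F) ^ (p t) = n + k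
  · rw [if_pos hcond]
    set l₀ : Fin k →₀ ℕ := Finsupp.equivFunOnFinite.symm (fun t => (rr F) ^ (p t) - 1) with hl₀
    have hl₀app : ∀ t, l₀ t = (rr F) ^ (p t) - 1 := fun t => rfl
    have hmem : l₀ ∈ Finset.finsuppAntidiag (Finset.univ : Finset (Fin k)) n := by
      rw [Finset.mem_finsuppAntidiag]
      refine ⟨?_, Finset.subset_univ _⟩
      show (∑ t : Fin k, l₀ t) = n
      have : (∑ t : Fin k, l₀ t) + k = ∑ t : Fin k, ((rr F) ^ (p t) - 1 + 1) := by
        rw [Finset.sum_add_distrib]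
        simp [hl₀app, Finset.card_univ]
      have h2 : ∑ t : Fin k, ((rr F) ^ (p t) - 1 + 1) = n + k := by
        rw [← hcond]
        apply Finset.sum_congr rfl
        intro t _
        have := hp1 t; omega
      have := this.trans h2
      omega
    rw [Finset.sum_eq_single_of_mem l₀ hmem]
    · have : ∀ t : Fin k, (if l₀ t + 1 = (rr F) ^ (p t) then (-1 : K F) ^ (p t) / L F (p t) else 0)
          = (-1 : K F) ^ (p t) / L F (p t) := by
        intro t
        rw [if_pos (by have := hp1 t; rw [hl₀app]; omega)]
      rw [Finset.prod_congr rfl (fun t _ => this t)]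
      rw [Finset.prod_div_distrib, Finset.prod_pow_eq_pow_sum]
    · intro l hl hne
      have : ∃ t : Fin k, l t ≠ l₀ t := by
        by_contra hc
        push_neg at hc
        exact hne (Finsupp.ext hc)
      obtain ⟨t, ht⟩ := this
      apply Finset.prod_eq_zero (Finset.mem_univ t)
      rw [if_neg]
      rw [hl₀app] at ht
      have := hp1 t; omega
  · rw [if_neg hcond]
    apply Finset.sum_eq_zero
    intro l hl
    rw [Finset.mem_finsuppAntidiag] at hl
    by_contra hne
    have hall : ∀ t : Fin k, l t + 1 = (rr F) ^ (p t) := by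
      intro t
      by_contra hc
      exact hne (Finset.prod_eq_zero (Finset.mem_univ t) (if_neg hc))
    apply hcond
    calc ∑ t, (rr F) ^ (p t) = ∑ t : Fin k, (l t + 1) := by
          exact Finset.sum_congr rfl fun t _ => (hall t).symm
      _ = n + k := by
          have hsum : (∑ t : Fin k, l t) = n := hl.1
          rw [Finset.sum_add_distrib, hsum]
          simp [Finset.card_univ]

lemma constCoeff_g : PowerSeries.constantCoeff (logCdivZ F - 1) = 0 := by
  have h := coeff_g F 1 0 (by omega)
  rw [← PowerSeries.coeff_zero_eq_constantCoeff_apply, h]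
  have : ¬(0 + 1 = (rr F) ^ 1) := by have := two_le_rr F; simp; omega
  rw [Finset.Icc_self, Finset.sum_singleton, if_neg this]

lemma gpow_coeff_zero (k m : ℕ) (h : m < k) :
    PowerSeries.coeff m ((1 - logCdivZ F) ^ k) = 0 := by
  have hc : PowerSeries.constantCoeff (1 - logCdivZ F) = 0 := by
    have := constCoeff_g F
    rw [show (1 - logCdivZ F) = -(logCdivZ F - 1) by ring, map_neg, this, neg_zero]
  have hX : (PowerSeries.X : PowerSeries (K F)) ∣ (1 - logCdivZ F) :=
    PowerSeries.X_dvd_iff.mpr hc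
  exact (PowerSeries.X_pow_dvd_iff.mp (pow_dvd_pow_of_dvd hX k)) m h

def Sser (m : ℕ) : PowerSeries (K F) := ∑ j ∈ Finset.range (m + 1), (1 - logCdivZ F) ^ j

def Bser : PowerSeries (K F) :=
  PowerSeries.mk fun m => PowerSeries.coeff m (Sser F m)

lemma coeff_Bser (m p : ℕ) (hp : p ≤ m) :
    PowerSeries.coeff p (Bser F) = PowerSeries.coeff p (Sser F m) := by
  rw [Bser, PowerSeries.coeff_mk, Sser, Sser, map_sum, map_sum]
  apply Finset.sum_subset
  · exact Finset.range_subset_range.mpr (by omega)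
  · intro j _ hj
    rw [Finset.mem_range] at hj
    exact gpow_coeff_zero F j p (by omega)

lemma Bser_mul : Bser F * logCdivZ F = 1 := by
  ext m
  rw [PowerSeries.coeff_mul]
  have step : ∀ pq ∈ Finset.HasAntidiagonal.antidiagonal m,
      PowerSeries.coeff pq.1 (Bser F) * PowerSeries.coeff pq.2 (logCdivZ F)
      = PowerSeries.coeff pq.1 (Sser F m) * PowerSeries.coeff pq.2 (logCdivZ F) := by
    intro pq hpq
    rw [Finset.HasAntidiagonal.mem_antidiagonal] at hpq
    rw [coeff_Bser F m pq.1 (by omega)]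
  rw [Finset.sum_congr rfl step, ← PowerSeries.coeff_mul]
  have hgeom := geom_sum_mul (1 - logCdivZ F) (m + 1)
  have hSL : Sser F m * logCdivZ F = 1 - (1 - logCdivZ F) ^ (m + 1) := by
    rw [Sser]
    linear_combination -hgeom
  rw [hSL, map_sub, gpow_coeff_zero F (m + 1) m (by omega), sub_zero]


/-- Theorem 3: for `n ≥ 1`,
`CC_n = Π(n) Σ_{k=1}^n (-1)^k Σ_{i_1,…,i_k ≥ 1, r^{i_1}+⋯+r^{i_k} = n+k}
  (-1)^{i_1+⋯+i_k} / (L_{i_1} ⋯ L_{i_k})`.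
(Each `i_t` in the inner sum satisfies `i_t < r^{i_t} ≤ n + k`, so tuples drawn from
`Icc 1 (n+k)` and filtered by the power-sum condition are exactly the tuples in question.) -/
theorem cauchyCarlitz_eq_sum_over_tuples
    (CC : ℕ → K F)
    (hCC : (PowerSeries.mk fun n => CC n / Cf F n) * logCdivZ F = 1)
    (n : ℕ) (hn : 1 ≤ n) :
    CC n = Cf F n * ∑ k ∈ Finset.Icc 1 n, (-1 : K F) ^ k *
      ∑ i ∈ (Fintype.piFinset fun _ : Fin k => Finset.Icc 1 (n + k)).filter
          (fun i => ∑ t, (rr F) ^ (i t) = n + k),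
        (-1 : K F) ^ (∑ t, i t) / ∏ t, L F (i t) := by
  classical
  set A := (PowerSeries.mk fun n => CC n / Cf F n) with hA
  have hAB : A = Bser F := by
    calc A = A * (Bser F * logCdivZ F) := by rw [Bser_mul, mul_one]
      _ = Bser F * (A * logCdivZ F) := by ring
      _ = Bser F := by rw [hCC, mul_one]
  have hCCn : CC n = Cf F n * PowerSeries.coeff n A := by
    rw [hA, PowerSeries.coeff_mk, mul_comm, div_mul_cancel₀ _ (Cf_ne_zero F n)]
  rw [hCCn, hAB]
  congr 1
  have h1 : PowerSeries.coeff n (Bser F) =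
      ∑ j ∈ Finset.range (n + 1), PowerSeries.coeff n ((1 - logCdivZ F) ^ j) := by
    rw [Bser, PowerSeries.coeff_mk, Sser, map_sum]
  rw [h1]
  have hins : Finset.range (n + 1) = insert 0 (Finset.Icc 1 n) := by
    ext x; simp [Nat.lt_succ_iff]; omega
  rw [hins, Finset.sum_insert (by simp)]
  have h0 : PowerSeries.coeff n ((1 - logCdivZ F) ^ 0) = 0 := by
    rw [pow_zero, PowerSeries.coeff_one, if_neg (by omega)]
  rw [h0, zero_add]
  apply Finset.sum_congr rfl
  intro j hj
  rw [Finset.mem_Icc] at hj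
  rw [show (1 - logCdivZ F) ^ j
      = PowerSeries.C ((-1 : K F) ^ j) * (logCdivZ F - 1) ^ j from by
    rw [map_pow, map_neg, map_one, ← mul_pow]; congr 1; ring, PowerSeries.coeff_C_mul, coeff_gpow F n j hj.1]
end
end

section
/- For every integer n ≥ 1, the n-th Cauchy number satisfies c_n = (−1)^n · n! · Σ_{k=1}^{n} (−1)^k Σ 1/(i_1 ⋯ i_k), where the inner sum runs over all k-tuples of integers i_1, …, i_k ≥ 2 with i_1 + ⋯ + i_k = n + k. -/
open scoped Classical
open PowerSeries Finset

noncomputable section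

/-- The formal power series `log(1+z) = Σ_{m ≥ 1} (-1)^{m-1} z^m / m` in `ℚ⟦z⟧`. -/
def log1p : PowerSeries ℚ :=
  PowerSeries.mk fun m => if m = 0 then 0 else (-1 : ℚ) ^ (m - 1) / m

/-- The formal power series `log(1+z)/z` in `ℚ⟦z⟧`. -/
def log1pDivZ : PowerSeries ℚ :=
  PowerSeries.mk fun n => PowerSeries.coeff (n + 1) log1p

/-- The formal power series `-log(1-t) = Σ_{m ≥ 1} t^m / m` in `ℚ⟦t⟧`. -/
def negLog1m : PowerSeries ℚ :=
  PowerSeries.mk fun m => if m = 0 then 0 else 1 / (m : ℚ)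

/-- Auxiliary series `f = 1 - log(1+z)/z = Σ_{m≥1} (-1)^{m+1} z^m/(m+1)`. -/
def fps : PowerSeries ℚ :=
  PowerSeries.mk fun m => if m = 0 then 0 else (-1 : ℚ) ^ (m + 1) / (m + 1)

lemma log1pDivZ_eq : log1pDivZ = 1 - fps := by
  ext m
  simp only [log1pDivZ, log1p, fps, coeff_mk, map_sub, coeff_mk, PowerSeries.coeff_one]
  cases m with
  | zero => norm_num
  | succ m =>
    simp only [Nat.succ_ne_zero, if_false, Nat.add_sub_cancel, Nat.cast_add, Nat.cast_one]
    rw [pow_succ (-1:ℚ) (m+1)]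
    ring

lemma constantCoeff_fps : PowerSeries.constantCoeff fps = 0 := by
  simp [fps, ← coeff_zero_eq_constantCoeff_apply]

lemma coeff_fps_pow (n k : ℕ) (hk : 1 ≤ k) (hkn : k ≤ n) :
    PowerSeries.coeff n (fps ^ k) = (-1 : ℚ) ^ (n + k) *
      ∑ i ∈ (Fintype.piFinset fun _ : Fin k => Finset.Icc 2 (n + k)).filter
          (fun i => ∑ t, i t = n + k),
        1 / ∏ t, (i t : ℚ) := by
  rw [PowerSeries.coeff_pow, Finset.mul_sum]
  rw [← Finset.sum_filter_of_ne (p := fun l => ∀ j ∈ Finset.range k, 1 ≤ l j)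
    (by
      intro l hl hne j hj
      by_contra h
      push_neg at h
      interval_cases hlj : l j
      exact hne (Finset.prod_eq_zero hj (by simp [hlj, fps])))]
  refine Finset.sum_nbij' (i := fun l => fun t : Fin k => l t.val + 1)
    (j := fun i => Finsupp.onFinset (Finset.range k)
        (fun m => if h : m < k then i ⟨m, h⟩ - 1 else 0)
        (by intro a ha; simp only [Finset.mem_range]; by_contra h; simp [h] at ha))
    ?_ ?_ ?_ ?_ ?_
  · intro l hl
    simp only [Finset.mem_filter, Finset.mem_finsuppAntidiag] at hl
    obtain ⟨⟨hsum, hsupp⟩, hpos⟩ := hl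
    have hsum' : ∑ t : Fin k, l t.val = n := by
      rw [Fin.sum_univ_eq_sum_range]; exact hsum
    simp only [Finset.mem_filter, Fintype.mem_piFinset, Finset.mem_Icc]
    refine ⟨fun t => ⟨by have := hpos t.val (Finset.mem_range.2 t.isLt); omega, ?_⟩, ?_⟩
    · have : l t.val ≤ n := by
        rw [← hsum']
        exact Finset.single_le_sum (f := fun t : Fin k => l t.val) (fun _ _ => Nat.zero_le _)
          (Finset.mem_univ t)
      omega
    · rw [Finset.sum_add_distrib, hsum']
      simp
  · intro i hi
    simp only [Finset.mem_filter, Fintype.mem_piFinset, Finset.mem_Icc] at hi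
    obtain ⟨hmem, hsum⟩ := hi
    simp only [Finset.mem_filter, Finset.mem_finsuppAntidiag]
    refine ⟨⟨?_, Finsupp.support_onFinset_subset⟩, ?_⟩
    · rw [← Fin.sum_univ_eq_sum_range (fun m => (Finsupp.onFinset (Finset.range k)
        (fun m => if h : m < k then i ⟨m, h⟩ - 1 else 0) _) m)]
      simp only [Finsupp.onFinset_apply]
      have : ∀ t : Fin k, (if h : t.val < k then i ⟨t.val, h⟩ - 1 else 0) = i t - 1 := by
        intro t; rw [dif_pos t.isLt]
      rw [Finset.sum_congr rfl fun t _ => this t]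
      have h1 : ∑ t : Fin k, (i t - 1) + ∑ t : Fin k, 1 = ∑ t : Fin k, i t := by
        rw [← Finset.sum_add_distrib]
        exact Finset.sum_congr rfl fun t _ => by have := (hmem t).1; omega
      simp only [Finset.sum_const, Finset.card_univ, Fintype.card_fin, smul_eq_mul,
        mul_one] at h1
      omega
    · intro j hj
      simp only [Finsupp.onFinset_apply]
      rw [dif_pos (Finset.mem_range.1 hj)]
      have := (hmem ⟨j, Finset.mem_range.1 hj⟩).1
      omega
  · intro l hl
    simp only [Finset.mem_filter, Finset.mem_finsuppAntidiag] at hl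
    obtain ⟨⟨hsum, hsupp⟩, hpos⟩ := hl
    ext m
    simp only [Finsupp.onFinset_apply]
    by_cases h : m < k
    · rw [dif_pos h]; simp
    · rw [dif_neg h]
      by_contra hne
      have : m ∈ l.support := Finsupp.mem_support_iff.2 fun h0 => hne h0.symm
      exact h (Finset.mem_range.1 (hsupp this))
  · intro i hi
    simp only [Finset.mem_filter, Fintype.mem_piFinset, Finset.mem_Icc] at hi
    funext t
    rcases t with ⟨tv, htv⟩
    simp only [Finsupp.onFinset_apply]
    rw [dif_pos htv]
    have := (hi.1 ⟨tv, htv⟩).1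
    omega
  · intro l hl
    simp only [Finset.mem_filter, Finset.mem_finsuppAntidiag] at hl
    obtain ⟨⟨hsum, hsupp⟩, hpos⟩ := hl
    have hsum' : ∑ t : Fin k, l t.val = n := by
      rw [Fin.sum_univ_eq_sum_range]; exact hsum
    rw [← Fin.prod_univ_eq_prod_range (fun m => PowerSeries.coeff (l m) fps)]
    have hcoeff : ∀ t : Fin k, PowerSeries.coeff (l t.val) fps
        = (-1 : ℚ) ^ (l t.val + 1) * (1 / ((l t.val : ℚ) + 1)) := by
      intro t
      have h1 : l t.val ≠ 0 := by have := hpos t.val (Finset.mem_range.2 t.isLt); omega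
      unfold fps
      rw [coeff_mk, if_neg h1, div_eq_mul_one_div]
    rw [Finset.prod_congr rfl fun t _ => hcoeff t, Finset.prod_mul_distrib,
      Finset.prod_pow_eq_pow_sum]
    have hpowsum : ∑ t : Fin k, (l t.val + 1) = n + k := by
      rw [Finset.sum_add_distrib, hsum']; simp
    rw [hpowsum]
    congr 1
    rw [one_div, ← Finset.prod_inv_distrib]
    refine Finset.prod_congr rfl fun t _ => ?_
    push_cast
    rw [one_div]

/-- Theorem 4: for `n ≥ 1`,
`c_n = (-1)^n n! Σ_{k=1}^n (-1)^k Σ_{i_1,…,i_k ≥ 2, i_1+⋯+i_k = n+k} 1/(i_1 ⋯ i_k)`.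
(Each `i_t` in the inner sum satisfies `i_t ≤ n + k`, so tuples drawn from `Icc 2 (n+k)`
and filtered by the sum condition are exactly the tuples in question.) -/
theorem cauchy_eq_sum_over_tuples
    (c : ℕ → ℚ)
    (hc : (PowerSeries.mk fun n => c n / n.factorial) * log1pDivZ = 1)
    (n : ℕ) (hn : 1 ≤ n) :
    c n = (-1 : ℚ) ^ n * n.factorial * ∑ k ∈ Finset.Icc 1 n, (-1 : ℚ) ^ k *
      ∑ i ∈ (Fintype.piFinset fun _ : Fin k => Finset.Icc 2 (n + k)).filter
          (fun i => ∑ t, i t = n + k),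
        1 / ∏ t, (i t : ℚ) := by
  set A : PowerSeries ℚ := PowerSeries.mk fun n => c n / n.factorial with hA
  rw [log1pDivZ_eq] at hc
  set S : PowerSeries ℚ := ∑ k ∈ Finset.range (n + 1), fps ^ k with hS
  have hgeo : (1 - fps) * S = 1 - fps ^ (n + 1) := by
    have := geom_sum_mul fps (n + 1)
    rw [hS]
    linear_combination -this
  have hSA : S = A - A * fps ^ (n + 1) := by
    calc S = (A * (1 - fps)) * S := by rw [hc, one_mul]
    _ = A * ((1 - fps) * S) := by ring
    _ = A * (1 - fps ^ (n + 1)) := by rw [hgeo]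
    _ = A - A * fps ^ (n + 1) := by ring
  have hdvd : (PowerSeries.X : PowerSeries ℚ) ^ (n + 1) ∣ A * fps ^ (n + 1) :=
    Dvd.dvd.mul_left (pow_dvd_pow_of_dvd (PowerSeries.X_dvd_iff.2 constantCoeff_fps) _) A
  have hzero : PowerSeries.coeff n (A * fps ^ (n + 1)) = 0 :=
    PowerSeries.X_pow_dvd_iff.1 hdvd n (Nat.lt_succ_self n)
  have hcoeffS : PowerSeries.coeff n S = c n / n.factorial := by
    rw [hSA, map_sub, hzero, sub_zero, hA, coeff_mk]
  have hsplit : PowerSeries.coeff n S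
      = ∑ k ∈ Finset.Icc 1 n, PowerSeries.coeff n (fps ^ k) := by
    rw [hS, map_sum, Finset.sum_range_succ']
    rw [pow_zero, PowerSeries.coeff_one, if_neg (by omega), add_zero,
      ← Finset.Ico_add_one_right_eq_Icc, Finset.sum_Ico_eq_sum_range]
    norm_num
    exact Finset.sum_congr rfl fun i _ => by rw [add_comm 1 i]
  have hval : PowerSeries.coeff n S = (-1 : ℚ) ^ n *
      ∑ k ∈ Finset.Icc 1 n, (-1 : ℚ) ^ k *
      ∑ i ∈ (Fintype.piFinset fun _ : Fin k => Finset.Icc 2 (n + k)).filter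
          (fun i => ∑ t, i t = n + k),
        1 / ∏ t, (i t : ℚ) := by
    rw [hsplit, Finset.mul_sum]
    refine Finset.sum_congr rfl fun k hk => ?_
    rw [Finset.mem_Icc] at hk
    rw [coeff_fps_pow n k hk.1 hk.2, pow_add, mul_assoc]
  have hfac : (n.factorial : ℚ) ≠ 0 := Nat.cast_ne_zero.2 n.factorial_ne_zero
  rw [hval] at hcoeffS
  field_simp at hcoeffS
  linarith [hcoeffS]
end
end

section
/- For every integer n ≥ 1, the n-th Cauchy number satisfies c_n = (−1)^n · n! · Σ_{k=1}^{n} (−1)^k binom(n+1, k+1) Σ 1/(i_1 ⋯ i_k), where the inner sum runs over all k-tuples of integers i_1, …, i_k ≥ 1 with i_1 + ⋯ + i_k = n + k. -/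
open scoped Classical
open PowerSeries Finset

noncomputable section

lemma X_mul_log1pDivZ : (X : ℚ⟦X⟧) * log1pDivZ = log1p := by
  ext m
  cases m with
  | zero => simp [log1p, PowerSeries.coeff_zero_eq_constantCoeff]
  | succ m => rw [PowerSeries.coeff_succ_X_mul]; simp [log1pDivZ]

lemma constCoeff_u : constantCoeff (1 - log1pDivZ) = 0 := by
  simp [log1pDivZ, log1p, PowerSeries.coeff_mk]

lemma rescale_log1p : rescale (-1 : ℚ) log1p = -negLog1m := by
  ext m
  rw [PowerSeries.coeff_rescale]
  cases m with
  | zero => simp [log1p, negLog1m]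
  | succ m =>
    simp only [log1p, negLog1m, coeff_mk, Nat.succ_ne_zero, if_false, map_neg,
      Nat.add_sub_cancel]
    ring_nf
    rw [mul_comm m 2, pow_mul]
    simp

lemma coeff_log1p_pow (N j : ℕ) :
    coeff N (log1p ^ j) = (-1:ℚ)^N * (-1:ℚ)^j * coeff N (negLog1m ^ j) := by
  have h : (rescale (-1:ℚ)) (log1p ^ j) = (-1:ℚ)^j • negLog1m ^ j := by
    rw [map_pow, rescale_log1p, ← neg_one_smul ℚ negLog1m, smul_pow]
  have h2 := congrArg (coeff N) h
  rw [coeff_rescale, map_smul, smul_eq_mul] at h2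
  have hN : (-1:ℚ)^N * (-1:ℚ)^N = 1 := by rw [← mul_pow]; norm_num
  linear_combination (-1:ℚ)^N * h2 - (coeff N (log1p^j)) * hN

lemma coeff_u_pow (n k : ℕ) :
    coeff n ((1 - log1pDivZ) ^ k) =
      ∑ j ∈ range (k+1),
        (Nat.choose k j : ℚ) * (-1:ℚ)^j * (-1:ℚ)^n * coeff (n+j) (negLog1m ^ j) := by
  have hXu : (X : ℚ⟦X⟧) * (1 - log1pDivZ) = X - log1p := by
    rw [mul_sub, mul_one, X_mul_log1pDivZ]
  have h1 : coeff n ((1 - log1pDivZ) ^ k) = coeff (n + k) ((X - log1p) ^ k) := by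
    rw [← coeff_X_pow_mul ((1 - log1pDivZ) ^ k) k n, ← mul_pow, hXu]
  rw [h1, sub_eq_add_neg, add_comm (X:ℚ⟦X⟧) (-log1p), add_pow, map_sum]
  refine Finset.sum_congr rfl fun j hj => ?_
  rw [Finset.mem_range, Nat.lt_succ_iff] at hj
  rw [← map_natCast C (k.choose j), coeff_mul_C, mul_comm ((-log1p)^j) (X ^ (k-j)),
    coeff_X_pow_mul' , if_pos (by omega : k - j ≤ n + k)]
  have hnj : n + k - (k - j) = n + j := by omega
  rw [hnj, neg_pow]
  have hcc : ((-1:ℚ⟦X⟧))^j = C ((-1:ℚ)^j) := by simp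
  rw [hcc, coeff_C_mul, coeff_log1p_pow, pow_add]
  have hsq : ((-1:ℚ))^j * (-1:ℚ)^j = 1 := by rw [← mul_pow]; norm_num
  linear_combination ((k.choose j : ℚ) * (-1:ℚ)^n * coeff (n+j) (negLog1m^j) * (-1:ℚ)^j) * hsq

lemma coeff_c_eq (c : ℕ → ℚ)
    (hc : (PowerSeries.mk fun n => c n / n.factorial) * log1pDivZ = 1) (n : ℕ) :
    c n / n.factorial = ∑ k ∈ range (n+1), coeff n ((1 - log1pDivZ) ^ k) := by
  set A : ℚ⟦X⟧ := PowerSeries.mk fun n => c n / n.factorial with hA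
  set u : ℚ⟦X⟧ := 1 - log1pDivZ with hu
  have h1 : A * (1 - u) = 1 := by rw [hu, sub_sub_cancel]; exact hc
  have hg := geom_sum_mul u (n+1)
  have h2 : A = (∑ k ∈ range (n+1), u ^ k) + A * u ^ (n+1) := by
    linear_combination (∑ k ∈ range (n+1), u ^ k) * h1 + A * hg
  have h3 : coeff n (A * u ^ (n+1)) = 0 := by
    have hX : (X : ℚ⟦X⟧) ∣ u := X_dvd_iff.2 constCoeff_u
    have : (X : ℚ⟦X⟧) ^ (n+1) ∣ A * u ^ (n+1) :=
      Dvd.dvd.mul_left (pow_dvd_pow_of_dvd hX (n+1)) A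
    exact X_pow_dvd_iff.1 this n (Nat.lt_succ_self n)
  have h4 := congrArg (coeff n) h2
  rw [map_add, h3, add_zero, map_sum] at h4
  simpa [hA, coeff_mk] using h4

lemma coeff_negLog1m_pow (k N : ℕ) :
    coeff N (negLog1m ^ k) =
      ∑ i ∈ (Fintype.piFinset fun _ : Fin k => Finset.Icc 1 N).filter
          (fun i => ∑ t, i t = N), 1 / ∏ t, (i t : ℚ) := by
  rw [coeff_pow]
  rw [← Finset.sum_filter_of_ne (p := fun l : ℕ →₀ ℕ => ∀ m ∈ range k, 1 ≤ l m)
    (by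
      intro l hl hne m hm
      by_contra h
      push_neg at h
      interval_cases hlm : l m
      exact hne (Finset.prod_eq_zero hm (by simp [negLog1m, hlm])))]
  refine Finset.sum_nbij' (fun l => fun t : Fin k => l t.1)
    (fun i => Finsupp.onFinset (range k)
      (fun m => if h : m < k then i ⟨m, h⟩ else 0)
      (fun m hm => by by_contra h; simp at h; simp [h] at hm)) ?_ ?_ ?_ ?_ ?_
  · intro l hl
    simp only [Finset.mem_filter, Finset.mem_finsuppAntidiag] at hl
    obtain ⟨⟨hsum, hsupp⟩, hpos⟩ := hl
    simp only [Finset.mem_filter, Fintype.mem_piFinset, Finset.mem_Icc]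
    constructor
    · intro t
      refine ⟨hpos t.1 (by simpa using t.2), ?_⟩
      rw [← hsum]
      exact Finset.single_le_sum (fun m _ => Nat.zero_le _) (by simpa using t.2)
    · rw [← hsum, ← Fin.sum_univ_eq_sum_range]
  · intro i hi
    simp only [Finset.mem_filter, Fintype.mem_piFinset, Finset.mem_Icc] at hi
    obtain ⟨hmem, hsum⟩ := hi
    simp only [Finset.mem_filter, Finset.mem_finsuppAntidiag]
    refine ⟨⟨?_, Finsupp.support_onFinset_subset⟩, ?_⟩
    · rw [← hsum, ← Fin.sum_univ_eq_sum_range]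
      exact Finset.sum_congr rfl fun t _ => by simp [Finsupp.onFinset_apply, t.2]
    · intro m hm
      simp only [Finset.mem_range] at hm
      simpa [Finsupp.onFinset_apply, hm] using (hmem ⟨m, hm⟩).1
  · intro l hl
    simp only [Finset.mem_filter, Finset.mem_finsuppAntidiag] at hl
    obtain ⟨⟨hsum, hsupp⟩, hpos⟩ := hl
    ext m
    simp only [Finsupp.onFinset_apply]
    split_ifs with h
    · rfl
    · by_contra hne
      have : m ∈ l.support := Finsupp.mem_support_iff.2 (Ne.symm hne)
      have := hsupp this
      simp only [Finset.mem_range] at this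
      exact h this
  · intro i hi
    funext t
    simp [Finsupp.onFinset_apply, t.2]
  · intro l hl
    simp only [Finset.mem_filter, Finset.mem_finsuppAntidiag] at hl
    obtain ⟨⟨hsum, hsupp⟩, hpos⟩ := hl
    rw [one_div, ← Finset.prod_inv_distrib, ← Fin.prod_univ_eq_prod_range]
    refine Finset.prod_congr rfl fun t _ => ?_
    have h1 : 1 ≤ l t.1 := hpos t.1 (by simpa using t.2)
    simp [negLog1m, Nat.one_le_iff_ne_zero.1 h1]

/-- Proposition 1: for `n ≥ 1`,
`c_n = (-1)^n n! Σ_{k=1}^n (-1)^k C(n+1, k+1) Σ_{i_1,…,i_k ≥ 1, i_1+⋯+i_k = n+k} 1/(i_1 ⋯ i_k)`. -/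
theorem cauchy_eq_sum_over_tuples_with_binom
    (c : ℕ → ℚ)
    (hc : (PowerSeries.mk fun n => c n / n.factorial) * log1pDivZ = 1)
    (n : ℕ) (hn : 1 ≤ n) :
    c n = (-1 : ℚ) ^ n * n.factorial * ∑ k ∈ Finset.Icc 1 n,
      (-1 : ℚ) ^ k * (Nat.choose (n + 1) (k + 1) : ℚ) *
      ∑ i ∈ (Fintype.piFinset fun _ : Fin k => Finset.Icc 1 (n + k)).filter
          (fun i => ∑ t, i t = n + k),
        1 / ∏ t, (i t : ℚ) := by
  have h0 := coeff_c_eq c hc n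
  have h1 : c n / n.factorial = ∑ k ∈ range (n+1), ∑ j ∈ range (k+1),
      (Nat.choose k j : ℚ) * (-1:ℚ)^j * (-1:ℚ)^n * coeff (n+j) (negLog1m ^ j) := by
    rw [h0]; exact Finset.sum_congr rfl fun k _ => coeff_u_pow n k
  have h2 : c n / n.factorial = ∑ j ∈ range (n+1), ∑ k ∈ Finset.Icc j n,
      (Nat.choose k j : ℚ) * (-1:ℚ)^j * (-1:ℚ)^n * coeff (n+j) (negLog1m ^ j) := by
    rw [h1]
    exact Finset.sum_comm' (by intro k j; simp only [mem_range, Finset.mem_Icc]; omega)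
  have h3 : c n / n.factorial = ∑ j ∈ range (n+1),
      (Nat.choose (n+1) (j+1) : ℚ) * ((-1:ℚ)^j * (-1:ℚ)^n * coeff (n+j) (negLog1m ^ j)) := by
    rw [h2]
    refine Finset.sum_congr rfl fun j _ => ?_
    have hh : ∑ k ∈ Finset.Icc j n, (Nat.choose k j : ℚ) = ((n+1).choose (j+1) : ℚ) := by
      rw [← Nat.cast_sum, Nat.sum_Icc_choose]
    rw [← hh, Finset.sum_mul]
    exact Finset.sum_congr rfl fun k _ => by ring
  have hins : range (n+1) = insert 0 (Finset.Icc 1 n) := by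
    ext m; simp only [mem_range, Finset.mem_insert, Finset.mem_Icc]; omega
  have h4 : c n / n.factorial = ∑ j ∈ Finset.Icc 1 n,
      (Nat.choose (n+1) (j+1) : ℚ) * ((-1:ℚ)^j * (-1:ℚ)^n * coeff (n+j) (negLog1m ^ j)) := by
    rw [h3, hins, Finset.sum_insert (by simp)]
    have : coeff (n+0) (negLog1m ^ 0) = 0 := by
      simp [PowerSeries.coeff_one, Nat.one_le_iff_ne_zero.1 hn]
    rw [this]; simp
  have hfac : (n.factorial : ℚ) ≠ 0 := Nat.cast_ne_zero.2 n.factorial_ne_zero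
  have h5 : c n = n.factorial * (c n / n.factorial) := by field_simp
  rw [h5, h4, Finset.mul_sum, Finset.mul_sum]
  refine Finset.sum_congr rfl fun j hj => ?_
  rw [coeff_negLog1m_pow j (n+j)]
  ring
end
end

section
/- For all integers n ≥ 1 and m ≥ 1, the n-th Cauchy number of order m satisfies c_n^{(m)} = (−1)^n Σ_{k=1}^{n} (−1)^k · binom(n+1, k+1)/binom(n+mk, n) · S1(n+mk, mk), where S1 denotes the unsigned Stirling numbers of the first kind. -/
open scoped Classical
open PowerSeries Finset

noncomputable section

/-- The series `-log(1-t)/t`. -/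
def hSer : PowerSeries ℚ := PowerSeries.mk fun n => 1 / ((n : ℚ) + 1)

lemma negLog1m_eq_X_mul : negLog1m = X * hSer := by
  ext n
  cases n with
  | zero => simp [negLog1m, hSer]
  | succ k =>
      rw [PowerSeries.coeff_succ_X_mul]
      simp [negLog1m, hSer]

lemma rescale_log1pDivZ : rescale (-1 : ℚ) log1pDivZ = hSer := by
  ext n
  rw [PowerSeries.coeff_rescale]
  simp only [log1pDivZ, log1p, hSer, PowerSeries.coeff_mk, Nat.succ_ne_zero, if_false,
    Nat.add_sub_cancel]
  push_cast
  rw [div_eq_mul_inv, ← mul_assoc, ← mul_pow]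
  norm_num

lemma constCoeff_hSer : constantCoeff hSer = 1 := by
  have : constantCoeff hSer = PowerSeries.coeff 0 hSer := by
    simp [PowerSeries.coeff_zero_eq_constantCoeff]
  rw [this]
  simp [hSer]

/-- The binomial expansion identity. -/
lemma key_pow {R : Type*} [CommRing R] (w : R) (n : ℕ) :
    (1 - w) ^ (n + 1)
      = 1 - ((n : R) + 1) * w
        - ∑ k ∈ Finset.Icc 1 n,
            ((-1 : R) ^ k * (Nat.choose (n + 1) (k + 1) : R)) * w ^ (k + 1) := by
  have h := add_pow (-w) (1 : R) (n + 1)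
  simp only [one_pow, mul_one] at h
  have hsum : ∑ j ∈ Finset.range (n + 2), (-w) ^ j * (((n + 1).choose j : ℕ) : R)
      = (-w) ^ 0 * (((n + 1).choose 0 : ℕ) : R)
        + (-w) ^ 1 * (((n + 1).choose 1 : ℕ) : R)
        + ∑ i ∈ Finset.range n, (-w) ^ (i + 2) * (((n + 1).choose (i + 2) : ℕ) : R) := by
    rw [Finset.sum_range_succ' (fun j => (-w) ^ j * (((n + 1).choose j : ℕ) : R)) (n + 1)]
    rw [Finset.sum_range_succ' (fun j => (-w) ^ (j + 1) * (((n + 1).choose (j + 1) : ℕ) : R)) n]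
    ring
  have hIcc : ∑ k ∈ Finset.Icc 1 n,
        ((-1 : R) ^ k * (Nat.choose (n + 1) (k + 1) : R)) * w ^ (k + 1)
      = ∑ i ∈ Finset.range n,
        ((-1 : R) ^ (1 + i) * (Nat.choose (n + 1) ((1 + i) + 1) : R)) * w ^ ((1 + i) + 1) := by
    rw [← Finset.Ico_add_one_right_eq_Icc, Finset.sum_Ico_eq_sum_range]
    simp
  have hterm : ∀ i ∈ Finset.range n, (-w) ^ (i + 2) * (((n + 1).choose (i + 2) : ℕ) : R)
      = -(((-1 : R) ^ (1 + i) * (Nat.choose (n + 1) ((1 + i) + 1) : R)) * w ^ ((1 + i) + 1)) := by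
    intro i _
    have h2 : (1 + i) + 1 = i + 2 := by ring
    rw [h2, neg_pow]
    ring
  have h1w : (1 - w) = (-w + 1) := by ring
  rw [h1w, h, hsum, hIcc, Finset.sum_congr rfl hterm, Finset.sum_neg_distrib]
  simp only [pow_zero, one_mul, pow_one, Nat.choose_zero_right, Nat.choose_one_right]
  push_cast
  ring

/-- Proposition 5: for `n, m ≥ 1`, the Cauchy number of order `m` satisfies
`c_n^{(m)} = (-1)^n Σ_{k=1}^n (-1)^k (C(n+1, k+1) / C(n+mk, n)) · S1(n+mk, mk)`. -/
theorem cauchyHigherOrder_eq_sum_stirlingFirst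
    (cho : ℕ → ℕ → ℚ) (S1 : ℕ → ℕ → ℚ)
    (hcho : ∀ m : ℕ,
      (PowerSeries.mk fun n => cho m n / n.factorial) * log1pDivZ ^ m = 1)
    (hS1 : ∀ n k : ℕ,
      PowerSeries.coeff n (negLog1m ^ k) / k.factorial = S1 n k / n.factorial)
    (n m : ℕ) (hn : 1 ≤ n) (hm : 1 ≤ m) :
    cho m n = (-1 : ℚ) ^ n * ∑ k ∈ Finset.Icc 1 n,
      (-1 : ℚ) ^ k * ((Nat.choose (n + 1) (k + 1) : ℚ) / (Nat.choose (n + m * k) n : ℚ)) *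
        S1 (n + m * k) (m * k) := by
  classical
  set F : PowerSeries ℚ := PowerSeries.mk fun n => cho m n / n.factorial with hF
  set G : PowerSeries ℚ := rescale (-1 : ℚ) F with hG
  set w : PowerSeries ℚ := hSer ^ m with hw
  have hGw : G * w = 1 := by
    rw [hG, hw, ← rescale_log1pDivZ, ← map_pow, ← map_mul, hcho m, map_one]
  have hw0 : constantCoeff w = 1 := by rw [hw, map_pow, constCoeff_hSer, one_pow]
  have hCk : ∀ k : ℕ, ((-1 : ℚ⟦X⟧) ^ k * (((n + 1).choose (k + 1) : ℕ) : ℚ⟦X⟧))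
      = C ((-1 : ℚ) ^ k * (((n + 1).choose (k + 1) : ℕ) : ℚ)) := by
    intro k
    rw [map_mul, map_pow, map_neg, map_one, map_natCast]
  have hCn : ((n : ℚ⟦X⟧) + 1) = C ((n : ℚ) + 1) := by
    rw [map_add, map_natCast, map_one]
  have key := key_pow w n
  have main : (1 - w) ^ (n + 1) * G
      = G - C ((n : ℚ) + 1)
        - ∑ k ∈ Finset.Icc 1 n,
            C ((-1 : ℚ) ^ k * (((n + 1).choose (k + 1) : ℕ) : ℚ)) * w ^ k := by
    rw [key, sub_mul, sub_mul, one_mul, Finset.sum_mul]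
    have h1 : ((n : ℚ⟦X⟧) + 1) * w * G = C ((n : ℚ) + 1) := by
      rw [mul_assoc, mul_comm w G, hGw, mul_one, hCn]
    have h2 : ∀ k ∈ Finset.Icc 1 n,
        ((-1 : ℚ⟦X⟧) ^ k * (((n + 1).choose (k + 1) : ℕ) : ℚ⟦X⟧)) * w ^ (k + 1) * G
          = C ((-1 : ℚ) ^ k * (((n + 1).choose (k + 1) : ℕ) : ℚ)) * w ^ k := by
      intro k _
      have hwg : w ^ (k + 1) * G = w ^ k := by
        rw [pow_succ, mul_assoc, mul_comm w G, hGw, mul_one]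
      rw [mul_assoc, hwg, hCk]
    rw [h1, Finset.sum_congr rfl h2]
  have hLHS : PowerSeries.coeff n ((1 - w) ^ (n + 1) * G) = 0 := by
    have hXdvd : (X : ℚ⟦X⟧) ∣ (1 - w) :=
      PowerSeries.X_dvd_iff.mpr (by rw [map_sub, map_one, hw0, sub_self])
    have hdvd : (X : ℚ⟦X⟧) ^ (n + 1) ∣ (1 - w) ^ (n + 1) * G :=
      Dvd.dvd.mul_right (pow_dvd_pow_of_dvd hXdvd (n + 1)) G
    exact PowerSeries.X_pow_dvd_iff.mp hdvd n (Nat.lt_succ_self n)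
  have hGcoeff : PowerSeries.coeff n G = (-1 : ℚ) ^ n * (cho m n / n.factorial) := by
    rw [hG, PowerSeries.coeff_rescale, hF, PowerSeries.coeff_mk]
  have hwcoeff : ∀ k : ℕ, PowerSeries.coeff n (w ^ k)
      = S1 (n + m * k) (m * k) * (m * k).factorial / (n + m * k).factorial := by
    intro k
    have h1 : negLog1m ^ (m * k) = X ^ (m * k) * hSer ^ (m * k) := by
      rw [negLog1m_eq_X_mul, mul_pow]
    have h2 : PowerSeries.coeff (n + m * k) (negLog1m ^ (m * k))
        = PowerSeries.coeff n (hSer ^ (m * k)) := by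
      rw [h1, PowerSeries.coeff_X_pow_mul]
    have h3 := hS1 (n + m * k) (m * k)
    have hfac1 : ((m * k).factorial : ℚ) ≠ 0 := by
      exact_mod_cast Nat.factorial_ne_zero (m * k)
    have hfac2 : (((n + m * k)).factorial : ℚ) ≠ 0 := by
      exact_mod_cast Nat.factorial_ne_zero (n + m * k)
    rw [div_eq_div_iff hfac1 hfac2] at h3
    rw [hw, ← pow_mul, ← h2, eq_div_iff hfac2]
    linarith [h3]
  have hcoeff := congrArg (PowerSeries.coeff n) main
  rw [hLHS, map_sub, map_sub, map_sum] at hcoeff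
  simp only [PowerSeries.coeff_C_mul] at hcoeff
  rw [hGcoeff, PowerSeries.coeff_C] at hcoeff
  have hn0 : n ≠ 0 := Nat.one_le_iff_ne_zero.mp hn
  rw [if_neg hn0] at hcoeff
  have hsum : (-1 : ℚ) ^ n * (cho m n / n.factorial)
      = ∑ k ∈ Finset.Icc 1 n,
          (-1 : ℚ) ^ k * (((n + 1).choose (k + 1) : ℕ) : ℚ)
            * (S1 (n + m * k) (m * k) * (m * k).factorial / (n + m * k).factorial) := by
    have := hcoeff
    simp only [hwcoeff] at this
    linarith [this]
  -- final numeric manipulation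
  have hterm : ∀ k ∈ Finset.Icc 1 n,
      (n.factorial : ℚ) * ((-1 : ℚ) ^ k * (((n + 1).choose (k + 1) : ℕ) : ℚ)
          * (S1 (n + m * k) (m * k) * (m * k).factorial / (n + m * k).factorial))
        = (-1 : ℚ) ^ k * ((Nat.choose (n + 1) (k + 1) : ℚ) / (Nat.choose (n + m * k) n : ℚ))
            * S1 (n + m * k) (m * k) := by
    intro k _
    have hle : n ≤ n + m * k := Nat.le_add_right n (m * k)
    rw [Nat.cast_choose ℚ hle, Nat.add_sub_cancel_left]
    have hfac1 : ((m * k).factorial : ℚ) ≠ 0 := by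
      exact_mod_cast Nat.factorial_ne_zero (m * k)
    have hfac2 : (((n + m * k)).factorial : ℚ) ≠ 0 := by
      exact_mod_cast Nat.factorial_ne_zero (n + m * k)
    have hfac3 : ((n).factorial : ℚ) ≠ 0 := by
      exact_mod_cast Nat.factorial_ne_zero n
    field_simp
  have hfac3 : ((n).factorial : ℚ) ≠ 0 := by
    exact_mod_cast Nat.factorial_ne_zero n
  have := congrArg (fun x => (-1 : ℚ) ^ n * ((n.factorial : ℚ) * x)) hsum
  rw [Finset.mul_sum, Finset.sum_congr rfl hterm] at this
  calc cho m n = (-1 : ℚ) ^ n * ((n.factorial : ℚ) * ((-1 : ℚ) ^ n * (cho m n / n.factorial))) := by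
        rw [← mul_assoc, mul_comm ((-1:ℚ)^n), mul_assoc, ← mul_assoc ((-1:ℚ)^n), ← mul_pow]
        norm_num
        field_simp
    _ = _ := this

end
end
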